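/- Let R be a G-graded commutative ring such that R_e is an EM-ring and for every σ in the support of the grading there exists u_σ ∈ R_σ with R_σ = R_e u_σ and Ann_{R_e}(u_σ) = {0}. Then R is an EM-G-graded ring. -/

import Mathlib

open Polynomial

/-- `R` (with grading `𝒜`) is an EM-`G`-graded ring: every nonzero homogeneous
zero-divisor polynomial in `R[x]` has an annihilating content. -/
def IsEMGGraded {G R : Type*} [CommRing R] (𝒜 : G → AddSubgroup R) : Prop :=
  ∀ f : R[X], f ≠ 0 → (∃ σ : G, ∀ i, f.coeff i ∈ 𝒜 σ) → f ∉ nonZeroDivisors R[X] →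
    ∃ (c : R) (g : R[X]), c ∉ nonZeroDivisors R ∧ g ∈ nonZeroDivisors R[X] ∧ f = C c * g

/-- The subring of `R` whose carrier is the set `A` is an EM-ring: identifying `A[x]` with
the polynomials over `R` all of whose coefficients lie in `A`, every polynomial over `A`
that is a zero divisor in `A[x]` factors as `c·g` with `c` a zero divisor of `A` and `g`
regular in `A[x]`. -/
def IsEMSubring {R : Type*} [CommRing R] (A : Set R) : Prop :=
  ∀ f : R[X], (∀ i, f.coeff i ∈ A) →
    (∃ p : R[X], p ≠ 0 ∧ (∀ i, p.coeff i ∈ A) ∧ p * f = 0) →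
    ∃ (c : R) (g : R[X]), c ∈ A ∧ (∀ i, g.coeff i ∈ A) ∧
      (∃ d ∈ A, d ≠ 0 ∧ c * d = 0) ∧
      (∀ p : R[X], (∀ i, p.coeff i ∈ A) → p * g = 0 → p = 0) ∧
      f = C c * g

lemma exists_coeff_ne_zero_aux {R : Type*} [CommRing R] {p : R[X]} (hp : p ≠ 0) :
    ∃ j, p.coeff j ≠ 0 := by
  by_contra h
  push_neg at h
  exact hp (Polynomial.ext fun n => by simp [h n])

section Aux

variable {G R : Type*} [AddGroup G] [DecidableEq G] [CommRing R]
variable (𝒜 : G → AddSubgroup R) [GradedRing 𝒜]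

open DirectSum

/-- A polynomial built from a choice of coefficients indexed by the support of `p`. -/
noncomputable def mkPoly (p : R[X]) (t : ℕ → R) : R[X] :=
  ∑ i ∈ p.support, C (t i) * X ^ i

lemma mkPoly_coeff (p : R[X]) (t : ℕ → R) (j : ℕ) :
    (mkPoly p t).coeff j = if j ∈ p.support then t j else 0 := by
  rw [mkPoly, finset_sum_coeff]
  simp_rw [coeff_C_mul, coeff_X_pow, mul_ite, mul_one, mul_zero]
  exact Finset.sum_ite_eq p.support j t

/-- The degree-`τ` component of a polynomial, taken coefficientwise. -/
noncomputable def pcomp (p : R[X]) (τ : G) : R[X] :=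
  mkPoly p fun i => GradedRing.proj 𝒜 τ (p.coeff i)

lemma pcomp_coeff (p : R[X]) (τ : G) (j : ℕ) :
    (pcomp 𝒜 p τ).coeff j = GradedRing.proj 𝒜 τ (p.coeff j) := by
  rw [pcomp, mkPoly_coeff]
  split_ifs with h
  · rfl
  · rw [notMem_support_iff.mp h, map_zero]

lemma pcomp_coeff_mem (p : R[X]) (τ : G) (j : ℕ) :
    (pcomp 𝒜 p τ).coeff j ∈ 𝒜 τ := by
  rw [pcomp_coeff, GradedRing.proj_apply]
  exact SetLike.coe_mem _

lemma pcomp_zero (τ : G) : pcomp 𝒜 (0 : R[X]) τ = 0 := by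
  simp [pcomp, mkPoly]

lemma eq_zero_of_pcomp (p : R[X]) (h : ∀ τ, pcomp 𝒜 p τ = 0) : p = 0 := by
  classical
  ext j
  have hcoe : ∀ τ : G, ((decompose 𝒜 (p.coeff j)) τ : R) = 0 := by
    intro τ
    have := congrArg (fun q : R[X] => q.coeff j) (h τ)
    simpa [pcomp_coeff, GradedRing.proj_apply] using this
  have := DirectSum.sum_support_decompose 𝒜 (p.coeff j)
  rw [coeff_zero, ← this]
  exact Finset.sum_eq_zero fun τ _ => hcoe τ

lemma pcomp_mul (p g : R[X]) (hg : ∀ i, g.coeff i ∈ 𝒜 (0 : G)) (τ : G) :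
    pcomp 𝒜 p τ * g = pcomp 𝒜 (p * g) τ := by
  ext n
  rw [coeff_mul, pcomp_coeff, coeff_mul, map_sum]
  refine Finset.sum_congr rfl fun x _ => ?_
  rw [pcomp_coeff]
  have := DirectSum.coe_decompose_mul_add_of_right_mem 𝒜
    (a := p.coeff x.1) (i := τ) (hg x.2)
  rw [add_zero] at this
  simp only [GradedRing.proj_apply]
  exact this.symm

lemma factor_poly (σ : G) (u : R)
    (hmul : ∀ a ∈ 𝒜 σ, ∃ r ∈ 𝒜 (0 : G), a = r * u)
    (p : R[X]) (hp : ∀ i, p.coeff i ∈ 𝒜 σ) :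
    ∃ q : R[X], (∀ i, q.coeff i ∈ 𝒜 (0 : G)) ∧ p = C u * q := by
  choose r hr hru using fun i => hmul (p.coeff i) (hp i)
  refine ⟨mkPoly p r, fun j => ?_, ?_⟩
  · rw [mkPoly_coeff]
    split_ifs with h
    · exact hr j
    · exact zero_mem _
  · ext n
    rw [coeff_C_mul, mkPoly_coeff]
    split_ifs with h
    · rw [mul_comm, ← hru n]
    · rw [notMem_support_iff.mp h, mul_zero]

lemma mul_coeff_mem_zero (p q : R[X])
    (hp : ∀ i, p.coeff i ∈ 𝒜 (0 : G)) (hq : ∀ i, q.coeff i ∈ 𝒜 (0 : G)) (n : ℕ) :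
    (p * q).coeff n ∈ 𝒜 (0 : G) := by
  rw [coeff_mul]
  refine AddSubgroup.sum_mem _ fun x _ => ?_
  have := SetLike.mul_mem_graded (hp x.1) (hq x.2)
  rwa [add_zero] at this

lemma reg_of_zero_reg
    (hu : ∀ σ : G, 𝒜 σ ≠ ⊥ → ∃ u ∈ 𝒜 σ,
      (∀ a ∈ 𝒜 σ, ∃ r ∈ 𝒜 (0 : G), a = r * u) ∧
      (∀ r ∈ 𝒜 (0 : G), r * u = 0 → r = 0))
    (g : R[X]) (hg : ∀ i, g.coeff i ∈ 𝒜 (0 : G))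
    (hreg : ∀ q : R[X], (∀ i, q.coeff i ∈ 𝒜 (0 : G)) → q * g = 0 → q = 0) :
    g ∈ nonZeroDivisors R[X] := by
  rw [mem_nonZeroDivisors_iff_right]
  intro p hp
  refine eq_zero_of_pcomp 𝒜 p fun τ => ?_
  have hpg : pcomp 𝒜 p τ * g = 0 := by
    rw [pcomp_mul 𝒜 p g hg τ, hp, pcomp_zero]
  by_contra hne
  obtain ⟨j, hj⟩ := exists_coeff_ne_zero_aux hne
  have hbot : 𝒜 τ ≠ ⊥ := by
    intro hb
    have := pcomp_coeff_mem 𝒜 p τ j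
    rw [hb, AddSubgroup.mem_bot] at this
    exact hj this
  obtain ⟨v, hv, hvmul, hvann⟩ := hu τ hbot
  obtain ⟨q, hq0, hqeq⟩ := factor_poly 𝒜 τ v hvmul (pcomp 𝒜 p τ) (pcomp_coeff_mem 𝒜 p τ)
  have h2 : C v * (q * g) = 0 := by rw [← mul_assoc, ← hqeq, hpg]
  have h3 : q * g = 0 := by
    ext n
    have hvn : v * (q * g).coeff n = 0 := by
      rw [← coeff_C_mul, h2, coeff_zero]
    rw [coeff_zero]
    exact hvann _ (mul_coeff_mem_zero 𝒜 q g hq0 hg n) (by rwa [mul_comm])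
  have hq : q = 0 := hreg q hq0 h3
  exact hne (by rw [hqeq, hq, mul_zero])

end Aux

/-- If `R_e` is an EM-ring and for every `σ` in the support there is
`u_σ ∈ R_σ` with `R_σ = R_e u_σ` and `Ann_{R_e}(u_σ) = 0`, then `R` is EM-`G`-graded. -/
theorem stmt_4 {G R : Type*} [AddGroup G] [DecidableEq G] [CommRing R]
    (𝒜 : G → AddSubgroup R) [GradedRing 𝒜]
    (hEM : IsEMSubring ((𝒜 (0 : G) : Set R)))
    (hu : ∀ σ : G, 𝒜 σ ≠ ⊥ → ∃ u ∈ 𝒜 σ,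
      (∀ a ∈ 𝒜 σ, ∃ r ∈ 𝒜 (0 : G), a = r * u) ∧
      (∀ r ∈ 𝒜 (0 : G), r * u = 0 → r = 0)) :
    IsEMGGraded 𝒜 := by
  intro f hf0 hhom hfz
  obtain ⟨σ, hfσ⟩ := hhom
  have hσbot : 𝒜 σ ≠ ⊥ := by
    obtain ⟨i, hi⟩ := exists_coeff_ne_zero_aux hf0
    intro hb
    have := hfσ i
    rw [hb, AddSubgroup.mem_bot] at this
    exact hi this
  obtain ⟨u, huσ, humul, huann⟩ := hu σ hσbot
  obtain ⟨f₀, hf₀coef, hf₀eq⟩ := factor_poly 𝒜 σ u humul f hfσ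
  by_cases hcase : ∃ q : R[X], q ≠ 0 ∧ (∀ i, q.coeff i ∈ 𝒜 (0 : G)) ∧ q * f₀ = 0
  · obtain ⟨c', g', hc'A, hg'A, ⟨d, hdA, hd0, hcd⟩, hreg', hf₀'⟩ := hEM f₀ hf₀coef hcase
    refine ⟨u * c', g', ?_, ?_, ?_⟩
    · intro hmem
      refine hd0 (mem_nonZeroDivisors_iff_right.mp hmem d ?_)
      calc d * (u * c') = u * (c' * d) := by ring
        _ = 0 := by rw [hcd, mul_zero]
    · exact reg_of_zero_reg 𝒜 hu g' hg'A hreg'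
    · rw [hf₀eq, hf₀', ← mul_assoc, ← C_mul]
  · have hreg : ∀ q : R[X], (∀ i, q.coeff i ∈ 𝒜 (0 : G)) → q * f₀ = 0 → q = 0 := by
      intro q hq hq0
      by_contra hne
      exact hcase ⟨q, hne, hq, hq0⟩
    have hf₀reg : f₀ ∈ nonZeroDivisors R[X] := reg_of_zero_reg 𝒜 hu f₀ hf₀coef hreg
    have hex : ∃ p : R[X], p * f = 0 ∧ p ≠ 0 := by
      rw [mem_nonZeroDivisors_iff_right] at hfz
      push_neg at hfz
      exact hfz
    obtain ⟨p, hpf, hp0⟩ := hex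
    have hpu : p * C u = 0 := by
      refine mem_nonZeroDivisors_iff_right.mp hf₀reg (p * C u) ?_
      rw [mul_assoc, ← hf₀eq, hpf]
    obtain ⟨j, hj⟩ := exists_coeff_ne_zero_aux hp0
    have hju : p.coeff j * u = 0 := by
      have := congrArg (fun q : R[X] => q.coeff j) hpu
      simpa [coeff_mul_C] using this
    refine ⟨u, f₀, ?_, hf₀reg, hf₀eq⟩
    intro hmem
    exact hj (mem_nonZeroDivisors_iff_right.mp hmem (p.coeff j) hju)
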